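/- The expected energy consumption E of an IoT mobile device is convex in its own offloading vector: ConvexOn ℝ S₀ E holds, where E(α) = ε_loc·G(α) + ε_tx·H(α). -/

import Mathlib

open Finset

noncomputable section

/-- Total offloading fraction `s(α) = Σ_j α_j`. -/
def sTot {N : ℕ} (α : Fin N → ℝ) : ℝ := ∑ j, α j

/-- Local computing delay contribution. -/
def Gfun {N : ℕ} (lam c f : ℝ) (α : Fin N → ℝ) : ℝ :=
  (1 - sTot α) * c / (f - (1 - sTot α) * lam * c)

/-- Wireless transmission delay contribution. -/
def Hfun {N : ℕ} (lam z r Sbar : ℝ) (α : Fin N → ℝ) : ℝ :=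
  sTot α * (lam * Sbar * sTot α / (2 * (1 - lam * z * sTot α / r)) + z / r)

/-- Expected energy consumption `E(α) = ε_loc·G(α) + ε_tx·H(α)`. -/
def Efun {N : ℕ} (lam c z r f Sbar εloc εtx : ℝ) (α : Fin N → ℝ) : ℝ :=
  εloc * Gfun lam c f α + εtx * Hfun lam z r Sbar α

/-- Basic feasible set `S₀`. -/
def S0 {N : ℕ} (lam c z r f : ℝ) : Set (Fin N → ℝ) :=
  {α | (∀ j, 0 ≤ α j) ∧ sTot α ≤ 1 ∧ (1 - sTot α) * lam * c < f ∧
    lam * z * sTot α < r}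

lemma sTot_comb {N : ℕ} (x y : Fin N → ℝ) (p q : ℝ) :
    sTot (p • x + q • y) = p * sTot x + q * sTot y := by
  simp [sTot, Finset.sum_add_distrib, Finset.mul_sum]

lemma inv_combo (u v p q : ℝ) (hu : 0 < u) (hv : 0 < v) (hp : 0 ≤ p) (hq : 0 ≤ q)
    (hpq : p + q = 1) : (p * u + q * v)⁻¹ ≤ p * u⁻¹ + q * v⁻¹ := by
  have hpq' : 0 < p ∨ 0 < q := by
    rcases hp.eq_or_lt with h | h
    · right; rw [← h] at hpq; linarith
    · left; exact h
  have hw : 0 < p * u + q * v := by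
    rcases hpq' with h | h
    · have := mul_pos h hu; nlinarith [mul_nonneg hq hv.le]
    · have := mul_pos h hv; nlinarith [mul_nonneg hp hu.le]
  rw [← sub_nonneg]
  have hexpr : p * u⁻¹ + q * v⁻¹ - (p * u + q * v)⁻¹
      = ((p * v + q * u) * (p * u + q * v) - u * v) / (u * v * (p * u + q * v)) := by
    field_simp
  have key : (p * v + q * u) * (p * u + q * v) - u * v = p * q * (u - v) ^ 2 := by
    linear_combination (u * v * (p + q + 1)) * hpq
  rw [hexpr, key]
  positivity

lemma combo_lt (a b m p q : ℝ) (ha : a < m) (hb : b < m) (hp : 0 ≤ p) (hq : 0 ≤ q)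
    (hpq : p + q = 1) : p * a + q * b < m := by
  have h1 : p * a ≤ p * max a b := mul_le_mul_of_nonneg_left (le_max_left a b) hp
  have h2 : q * b ≤ q * max a b := mul_le_mul_of_nonneg_left (le_max_right a b) hq
  have h3 : p * max a b + q * max a b = max a b := by linear_combination (max a b) * hpq
  have h4 : p * a + q * b ≤ max a b := by linarith
  exact lt_of_le_of_lt h4 (max_lt ha hb)

lemma S0_convex {N : ℕ} (lam c z r f : ℝ) : Convex ℝ (S0 (N := N) lam c z r f) := by
  intro x hx y hy p q hp hq hpq
  obtain ⟨hx1, hx2, hx3, hx4⟩ := hx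
  obtain ⟨hy1, hy2, hy3, hy4⟩ := hy
  have hs : sTot (p • x + q • y) = p * sTot x + q * sTot y := sTot_comb x y p q
  refine ⟨fun j => ?_, ?_, ?_, ?_⟩
  · have : (p • x + q • y) j = p * x j + q * y j := by simp [smul_eq_mul]
    rw [this]
    exact add_nonneg (mul_nonneg hp (hx1 j)) (mul_nonneg hq (hy1 j))
  · rw [hs]; nlinarith [mul_le_mul_of_nonneg_left hx2 hp, mul_le_mul_of_nonneg_left hy2 hq]
  · rw [hs]
    have : (1 - (p * sTot x + q * sTot y)) * lam * c
        = p * ((1 - sTot x) * lam * c) + q * ((1 - sTot y) * lam * c) := by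
      linear_combination (-(lam * c)) * hpq
    rw [this]
    exact combo_lt _ _ _ _ _ hx3 hy3 hp hq hpq
  · rw [hs]
    have : lam * z * (p * sTot x + q * sTot y)
        = p * (lam * z * sTot x) + q * (lam * z * sTot y) := by ring
    rw [this]
    exact combo_lt _ _ _ _ _ hx4 hy4 hp hq hpq

lemma convexOn_inv_affine {N : ℕ} {S : Set (Fin N → ℝ)} (hS : Convex ℝ S) (a b : ℝ)
    (hpos : ∀ α ∈ S, 0 < a + b * sTot α) :
    ConvexOn ℝ S (fun α => (a + b * sTot α)⁻¹) := by
  refine ⟨hS, fun x hx y hy p q hp hq hpq => ?_⟩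
  have key : a + b * sTot (p • x + q • y)
      = p * (a + b * sTot x) + q * (a + b * sTot y) := by
    rw [sTot_comb]; linear_combination (-a) * hpq
  simp only [smul_eq_mul]
  rw [key]
  exact inv_combo _ _ _ _ (hpos x hx) (hpos y hy) hp hq hpq

lemma convexOn_affine_sTot {N : ℕ} {S : Set (Fin N → ℝ)} (hS : Convex ℝ S) (C D : ℝ) :
    ConvexOn ℝ S (fun α => C * sTot α + D) := by
  refine ⟨hS, fun x hx y hy p q hp hq hpq => ?_⟩
  simp only [smul_eq_mul]
  rw [sTot_comb]
  apply le_of_eq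
  linear_combination (-D) * hpq

lemma convexOn_congr {N : ℕ} {S : Set (Fin N → ℝ)} {φ ψ : (Fin N → ℝ) → ℝ}
    (h : ConvexOn ℝ S ψ) (he : ∀ α ∈ S, φ α = ψ α) : ConvexOn ℝ S φ := by
  refine ⟨h.1, fun x hx y hy p q hp hq hpq => ?_⟩
  rw [he _ hx, he _ hy, he _ (h.1 hx hy hp hq hpq)]
  exact h.2 hx hy hp hq hpq

/-- The expected energy consumption `E` is convex on the basic feasible set `S₀`. -/
theorem energy_convexOn (N : ℕ) (hN : 1 ≤ N)
    (lam c z r f Sbar : ℝ) (hlam : 0 < lam) (hc : 0 < c) (hz : 0 < z) (hr : 0 < r)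
    (hf : 0 < f) (hSbar : 0 < Sbar)
    (εloc εtx : ℝ) (hεloc : 0 ≤ εloc) (hεtx : 0 ≤ εtx) :
    ConvexOn ℝ (S0 (N := N) lam c z r f)
      (Efun lam c z r f Sbar εloc εtx) := by
  have hk0 : 0 < lam * z / r := by positivity
  set A : ℝ := εloc * (f / lam) with hA
  set B : ℝ := εtx * (lam * Sbar / (2 * (lam * z / r) ^ 2)) with hB
  set C : ℝ := εtx * (z / r - (lam * Sbar / (2 * (lam * z / r) ^ 2)) * (lam * z / r))
    with hC
  set D : ℝ := εloc * (-(1 / lam)) + εtx * (-(lam * Sbar / (2 * (lam * z / r) ^ 2)))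
    with hD
  have hA0 : 0 ≤ A := by positivity
  have hB0 : 0 ≤ B := by positivity
  have hSc : Convex ℝ (S0 (N := N) lam c z r f) := S0_convex lam c z r f
  have hpos1 : ∀ α ∈ S0 (N := N) lam c z r f, 0 < (f - lam * c) + lam * c * sTot α := by
    intro α hα
    nlinarith [hα.2.2.1]
  have hpos2 : ∀ α ∈ S0 (N := N) lam c z r f,
      0 < (1 : ℝ) + (-(lam * z / r)) * sTot α := by
    intro α hα
    have h4 := hα.2.2.2
    have : lam * z / r * sTot α < 1 := by
      rw [div_mul_eq_mul_div, div_lt_one hr]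
      exact h4
    linarith
  have hconv : ConvexOn ℝ (S0 (N := N) lam c z r f)
      (fun α => A * ((f - lam * c) + lam * c * sTot α)⁻¹
        + (B * ((1 : ℝ) + (-(lam * z / r)) * sTot α)⁻¹ + (C * sTot α + D))) := by
    refine ConvexOn.add ((convexOn_inv_affine hSc _ _ hpos1).smul hA0) ?_
    exact ConvexOn.add ((convexOn_inv_affine hSc _ _ hpos2).smul hB0)
      (convexOn_affine_sTot hSc C D)
  refine convexOn_congr hconv ?_
  intro α hα
  have h1 := hpos1 α hα
  have h2 := hpos2 α hα
  set s : ℝ := sTot α with hs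
  have hd1 : (f - lam * c) + lam * c * s ≠ 0 := h1.ne'
  have hd1' : f - (1 - s) * lam * c ≠ 0 := by
    intro h; apply hd1; linear_combination h
  have hd3 : r - lam * z * s ≠ 0 := by
    have e : r * ((1 : ℝ) + (-(lam * z / r)) * s) = r - lam * z * s := by
      field_simp
      ring
    have := mul_pos hr h2
    rw [e] at this
    exact this.ne'
  have hd2 : (1 : ℝ) + (-(lam * z / r)) * s ≠ 0 := h2.ne'
  have hd2' : (1 : ℝ) - lam * z * s / r ≠ 0 := by
    intro h; apply hd3
    have : lam * z * s / r * r = 1 * r := by rw [sub_eq_zero] at h; rw [← h]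
    rw [div_mul_cancel₀ _ hr.ne'] at this
    linarith
  have hG : Gfun lam c f α
      = (f / lam) * ((f - lam * c) + lam * c * s)⁻¹ - 1 / lam := by
    show (1 - s) * c / (f - (1 - s) * lam * c) = _
    rw [show f - (1 - s) * lam * c = (f - lam * c) + lam * c * s by ring]
    have hd1'' : f - c * lam + s * c * lam ≠ 0 := by intro h; apply hd1; linarith
    field_simp
    ring
  have hH : Hfun lam z r Sbar α
      = (lam * Sbar / (2 * (lam * z / r) ^ 2)) * ((1 : ℝ) + (-(lam * z / r)) * s)⁻¹
        + (z / r - (lam * Sbar / (2 * (lam * z / r) ^ 2)) * (lam * z / r)) * s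
        - lam * Sbar / (2 * (lam * z / r) ^ 2) := by
    show s * (lam * Sbar * s / (2 * (1 - lam * z * s / r)) + z / r) = _
    have e1 : (1 : ℝ) + (-(lam * z / r)) * s = (r - lam * z * s) / r := by
      field_simp; ring
    have e2 : (1 : ℝ) - lam * z * s / r = (r - lam * z * s) / r := by
      field_simp
    rw [e1, e2]
    have hd3'' : r - s * lam * z ≠ 0 := by intro h; apply hd3; linarith
    field_simp
    ring
  show εloc * Gfun lam c f α + εtx * Hfun lam z r Sbar α = _
  rw [hG, hH, hA, hB, hC, hD]
  ring

end
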